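/- arXiv:1807.07797 — 3 statements merged into one kernel-verified Lean document; each statement's English description precedes it below -/
import Mathlib

section
/- Let x_t = A cos(2π t f / n + φ) for t ∈ ℤ, with A, φ real and f a real number such that neither (k−f)/n nor (k+f)/n is an integer for the given integer k with 0 ≤ k ≤ n−1. Let a_{k,p} = (1/√n) Σ_{j=0}^{n−1} x_{p−n+1+j} ω_n^{−jk} with ω_n = e^{2πi/n} and p̂ = p−n+1. Then a_{k,p} = (A/(2√n)) [ e^{iφ} ω_n^{f p̂} e^{−iπ(n−1)(k−f)/n} · sin(π(k−f)) / sin(π(k−f)/n) + e^{−iφ} ω_n^{−f p̂} e^{−iπ(n−1)(k+f)/n} · sin(π(k+f)) / sin(π(k+f)/n) ]. -/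
open Complex Finset

lemma aux_exp_sub_one (θ : ℝ) :
    Complex.exp (I * θ) - 1 = Complex.exp (I * θ / 2) * (2 * I * (Real.sin (θ/2) : ℂ)) := by
  have h1 : Complex.exp (I * θ / 2) * Complex.exp (I * θ / 2) = Complex.exp (I * θ) := by
    rw [← Complex.exp_add]; ring_nf
  have h2 : Complex.exp (I * θ / 2) * Complex.exp (-(I * θ / 2)) = 1 := by
    rw [← Complex.exp_add]; simp
  have hs : (Real.sin (θ/2) : ℂ) = Complex.sin ((θ:ℂ)/2) := by
    push_cast [Complex.ofReal_sin]; ring_nf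
  rw [hs, Complex.sin]
  have harg1 : ((θ:ℂ)/2) * I = I * θ / 2 := by ring
  have harg2 : -((θ:ℂ)/2) * I = -(I * θ / 2) := by ring
  rw [harg1, harg2]
  linear_combination (I^2) * h1 - (I^2) * h2 + (Complex.exp (I * (θ:ℂ)) - 1) * Complex.I_sq

lemma two_I_ne_zero : (2 * Complex.I : ℂ) ≠ 0 :=
  mul_ne_zero two_ne_zero Complex.I_ne_zero

lemma aux_geom (n : ℕ) (α : ℝ) (hs : Real.sin (α/2) ≠ 0) :
    ∑ j ∈ Finset.range n, Complex.exp (I * α * j)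
      = Complex.exp (I * (α * ((n:ℝ) - 1)) / 2) *
        ((Real.sin ((n:ℝ) * α / 2) / Real.sin (α / 2) : ℝ) : ℂ) := by
  have hr : Complex.exp (I * α) ≠ 1 := by
    intro h
    rw [Complex.exp_eq_one_iff] at h
    obtain ⟨m, hm⟩ := h
    have : (α : ℂ) = ((2 * Real.pi * m : ℝ) : ℂ) := by
      have h' : Complex.I * (α : ℂ) = Complex.I * ((2 * Real.pi * (m:ℝ) : ℝ) : ℂ) := by
        rw [hm]; push_cast; ring
      exact mul_left_cancel₀ Complex.I_ne_zero h'
    have hα : α = 2 * Real.pi * m := by exact_mod_cast this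
    apply hs
    rw [hα]
    have : (2 * Real.pi * m) / 2 = m * Real.pi := by ring
    rw [this, Real.sin_int_mul_pi]
  have hsum : ∀ j : ℕ, Complex.exp (I * α * j) = (Complex.exp (I * α)) ^ j := by
    intro j
    rw [← Complex.exp_nat_mul]; ring_nf
  simp only [hsum]
  rw [geom_sum_eq hr]
  have hn1 : Complex.exp (I * α) ^ n = Complex.exp (I * (((n:ℝ) * α : ℝ) : ℂ)) := by
    rw [← Complex.exp_nat_mul]; push_cast; ring_nf
  rw [hn1, aux_exp_sub_one ((n:ℝ)*α), aux_exp_sub_one α]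
  have h0 : ((Real.sin (α/2) : ℝ) : ℂ) ≠ 0 := Complex.ofReal_ne_zero.mpr hs
  have hEN : Complex.exp (I * (((n:ℝ)*α : ℝ) : ℂ) / 2)
      = Complex.exp (I * (α * ((n:ℝ)-1))/2) * Complex.exp (I * α / 2) := by
    rw [← Complex.exp_add]; congr 1; push_cast; ring
  rw [hEN, Complex.ofReal_div, mul_assoc, mul_div_assoc,
      mul_div_mul_left _ _ (Complex.exp_ne_zero (I * α / 2)),
      mul_div_mul_left _ _ (two_I_ne_zero)]

lemma two_I_ne' : True := trivial

/-- SWDFT of a global periodic signal expressed via Dirichlet kernels, in the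
leakage case where neither `(k−f)/n` nor `(k+f)/n` is an integer. -/
theorem swdft_global_signal_dirichlet
    (n : ℕ) (hn : 1 ≤ n) (A φ f : ℝ) (k : ℕ) (hk : k ≤ n - 1)
    (h1 : ¬ ∃ m : ℤ, ((k : ℝ) - f) / (n : ℝ) = (m : ℝ))
    (h2 : ¬ ∃ m : ℤ, ((k : ℝ) + f) / (n : ℝ) = (m : ℝ))
    (x : ℤ → ℝ)
    (hx : ∀ t : ℤ, x t = A * Real.cos (2 * Real.pi * (t : ℝ) * f / (n : ℝ) + φ))
    (p : ℤ) :
    (1 / Real.sqrt n : ℂ) *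
        ∑ j ∈ Finset.range n, (x (p - n + 1 + j) : ℂ) *
          Complex.exp (-(2 * (Real.pi : ℂ) * Complex.I * (j : ℂ) * (k : ℂ)) / (n : ℂ)) =
      ((A / (2 * Real.sqrt n) : ℝ) : ℂ) *
        (Complex.exp (Complex.I * (φ : ℂ)) *
            Complex.exp (2 * (Real.pi : ℂ) * Complex.I * (f : ℂ) * ((p : ℂ) - (n : ℂ) + 1) / (n : ℂ)) *
            Complex.exp (-(Real.pi : ℂ) * Complex.I * ((n : ℂ) - 1) * ((k : ℂ) - (f : ℂ)) / (n : ℂ)) *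
            ((Real.sin (Real.pi * ((k : ℝ) - f)) / Real.sin (Real.pi * ((k : ℝ) - f) / (n : ℝ)) : ℝ) : ℂ) +
          Complex.exp (-Complex.I * (φ : ℂ)) *
            Complex.exp (-(2 * (Real.pi : ℂ) * Complex.I * (f : ℂ) * ((p : ℂ) - (n : ℂ) + 1)) / (n : ℂ)) *
            Complex.exp (-(Real.pi : ℂ) * Complex.I * ((n : ℂ) - 1) * ((k : ℂ) + (f : ℂ)) / (n : ℂ)) *
            ((Real.sin (Real.pi * ((k : ℝ) + f)) / Real.sin (Real.pi * ((k : ℝ) + f) / (n : ℝ)) : ℝ) : ℂ)) := by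
  have hnR : (n : ℝ) ≠ 0 := Nat.cast_ne_zero.mpr (by omega)
  have hnC : (n : ℂ) ≠ 0 := Nat.cast_ne_zero.mpr (by omega)
  set α₁ : ℝ := 2 * Real.pi * (f - k) / n with hα₁
  set α₂ : ℝ := -(2 * Real.pi * (f + k) / n) with hα₂
  -- sin nonvanishing
  have hs1 : Real.sin (α₁ / 2) ≠ 0 := by
    intro hz
    rw [Real.sin_eq_zero_iff] at hz
    obtain ⟨m, hm⟩ := hz
    apply h1
    refine ⟨-m, ?_⟩
    have : Real.pi * ((f - k) / n) = Real.pi * (m : ℝ) := by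
      rw [hα₁] at hm; field_simp at hm ⊢; linarith
    have h' : (f - k) / n = m := mul_left_cancel₀ Real.pi_ne_zero this
    push_cast
    field_simp at h' ⊢
    linarith
  have hs2 : Real.sin (α₂ / 2) ≠ 0 := by
    intro hz
    rw [Real.sin_eq_zero_iff] at hz
    obtain ⟨m, hm⟩ := hz
    apply h2
    refine ⟨-m, ?_⟩
    have : Real.pi * ((f + k) / n) = Real.pi * ((-m : ℤ) : ℝ) := by
      rw [hα₂] at hm; push_cast at hm ⊢; field_simp at hm ⊢; linarith
    have h' : (f + k) / n = ((-m : ℤ) : ℝ) := mul_left_cancel₀ Real.pi_ne_zero this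
    push_cast at h' ⊢
    field_simp at h' ⊢
    linarith
  set C1 : ℂ := Complex.exp (Complex.I * (φ : ℂ)) *
      Complex.exp (2 * (Real.pi : ℂ) * Complex.I * (f : ℂ) * ((p : ℂ) - (n : ℂ) + 1) / (n : ℂ)) with hC1
  set C2 : ℂ := Complex.exp (-Complex.I * (φ : ℂ)) *
      Complex.exp (-(2 * (Real.pi : ℂ) * Complex.I * (f : ℂ) * ((p : ℂ) - (n : ℂ) + 1)) / (n : ℂ)) with hC2
  have hterm : ∀ j ∈ Finset.range n,
      (x (p - n + 1 + j) : ℂ) *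
        Complex.exp (-(2 * (Real.pi : ℂ) * Complex.I * (j : ℂ) * (k : ℂ)) / (n : ℂ))
      = (A : ℂ) / 2 * (C1 * Complex.exp (Complex.I * (α₁ : ℂ) * (j : ℂ))
          + C2 * Complex.exp (Complex.I * (α₂ : ℂ) * (j : ℂ))) := by
    intro j hj
    rw [hx, Complex.ofReal_mul, Complex.ofReal_cos, Complex.cos]
    have g1 : Complex.exp (((2 * Real.pi * ((p - ↑n + 1 + ↑j : ℤ) : ℝ) * f / ↑n + φ : ℝ) : ℂ) * Complex.I) *
        Complex.exp (-(2 * (Real.pi : ℂ) * Complex.I * (j : ℂ) * (k : ℂ)) / (n : ℂ))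
        = C1 * Complex.exp (Complex.I * (α₁ : ℂ) * (j : ℂ)) := by
      rw [hC1, mul_assoc, ← Complex.exp_add, ← Complex.exp_add, ← Complex.exp_add]
      congr 1
      rw [hα₁]; push_cast; field_simp; ring
    have g2 : Complex.exp (-((2 * Real.pi * ((p - ↑n + 1 + ↑j : ℤ) : ℝ) * f / ↑n + φ : ℝ) : ℂ) * Complex.I) *
        Complex.exp (-(2 * (Real.pi : ℂ) * Complex.I * (j : ℂ) * (k : ℂ)) / (n : ℂ))
        = C2 * Complex.exp (Complex.I * (α₂ : ℂ) * (j : ℂ)) := by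
      rw [hC2, mul_assoc, ← Complex.exp_add, ← Complex.exp_add, ← Complex.exp_add]
      congr 1
      rw [hα₂]; push_cast; field_simp; ring
    linear_combination ((A : ℂ) / 2) * g1 + ((A : ℂ) / 2) * g2
  have hsum : (∑ j ∈ Finset.range n, (x (p - n + 1 + j) : ℂ) *
        Complex.exp (-(2 * (Real.pi : ℂ) * Complex.I * (j : ℂ) * (k : ℂ)) / (n : ℂ)))
      = (A : ℂ) / 2 * (C1 * ∑ j ∈ Finset.range n, Complex.exp (Complex.I * (α₁ : ℂ) * (j : ℂ))
          + C2 * ∑ j ∈ Finset.range n, Complex.exp (Complex.I * (α₂ : ℂ) * (j : ℂ))) := by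
    rw [Finset.sum_congr rfl hterm]
    rw [Finset.mul_sum, Finset.mul_sum, ← Finset.sum_add_distrib, Finset.mul_sum]
  rw [hsum, aux_geom n α₁ hs1, aux_geom n α₂ hs2]
  -- ratios
  have R1 : Real.sin ((n:ℝ) * α₁ / 2) / Real.sin (α₁ / 2)
      = Real.sin (Real.pi * ((k : ℝ) - f)) / Real.sin (Real.pi * ((k : ℝ) - f) / (n : ℝ)) := by
    have a1 : (n:ℝ) * α₁ / 2 = -(Real.pi * ((k : ℝ) - f)) := by
      rw [hα₁]; field_simp; ring
    have a2 : α₁ / 2 = -(Real.pi * ((k : ℝ) - f) / (n : ℝ)) := by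
      rw [hα₁]; ring
    rw [a1, a2, Real.sin_neg, Real.sin_neg, neg_div_neg_eq]
  have R2 : Real.sin ((n:ℝ) * α₂ / 2) / Real.sin (α₂ / 2)
      = Real.sin (Real.pi * ((k : ℝ) + f)) / Real.sin (Real.pi * ((k : ℝ) + f) / (n : ℝ)) := by
    have a1 : (n:ℝ) * α₂ / 2 = -(Real.pi * ((k : ℝ) + f)) := by
      rw [hα₂]; field_simp; ring
    have a2 : α₂ / 2 = -(Real.pi * ((k : ℝ) + f) / (n : ℝ)) := by
      rw [hα₂]; ring
    rw [a1, a2, Real.sin_neg, Real.sin_neg, neg_div_neg_eq]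
  rw [R1, R2]
  -- exponentials
  have E1 : Complex.exp (Complex.I * ((α₁ : ℂ) * ((n:ℝ) - 1 : ℂ)) / 2)
      = Complex.exp (-(Real.pi : ℂ) * Complex.I * ((n : ℂ) - 1) * ((k : ℂ) - (f : ℂ)) / (n : ℂ)) := by
    congr 1
    rw [hα₁]; push_cast; field_simp; ring
  have E2 : Complex.exp (Complex.I * ((α₂ : ℂ) * ((n:ℝ) - 1 : ℂ)) / 2)
      = Complex.exp (-(Real.pi : ℂ) * Complex.I * ((n : ℂ) - 1) * ((k : ℂ) + (f : ℂ)) / (n : ℂ)) := by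
    congr 1
    rw [hα₂]; push_cast; field_simp; ring
  rw [E1, E2, hC1, hC2]
  push_cast
  ring
end

section
/- Let n be an even positive integer and let x_t = A cos(π t + φ) for t ∈ ℤ, with A, φ real (i.e., the signal at the Nyquist frequency f = n/2). Then for every window position p, with p̂ = p − n + 1, the SWDFT coefficient at frequency index n/2 is real and equals a_{n/2,p} = √n · A · (−1)^{p̂} · cos(φ). -/
open Complex Finset

lemma cos_pi_int_add (t : ℤ) (φ : ℝ) :
    Real.cos (Real.pi * (t : ℝ) + φ) = (-1 : ℝ) ^ t * Real.cos φ := by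
  rw [add_comm, mul_comm, Real.cos_add_int_mul_pi]

/-- At the Nyquist frequency `k = n/2` (with `n` even), the SWDFT coefficient of
`x_t = A cos(π t + φ)` is real and equals `√n · A · (−1)^{p̂} · cos φ`. -/
theorem swdft_nyquist
    (n : ℕ) (hn : 1 ≤ n) (heven : Even n)
    (A φ : ℝ)
    (x : ℤ → ℝ)
    (hx : ∀ t : ℤ, x t = A * Real.cos (Real.pi * (t : ℝ) + φ))
    (p : ℤ) :
    (1 / Real.sqrt n : ℂ) *
        ∑ j ∈ Finset.range n, (x (p - n + 1 + j) : ℂ) *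
          Complex.exp (-(2 * (Real.pi : ℂ) * Complex.I * (j : ℂ) * ((n : ℂ) / 2)) / (n : ℂ)) =
      ((Real.sqrt n * A * (-1 : ℝ) ^ (p - (n : ℤ) + 1) * Real.cos φ : ℝ) : ℂ) := by
  have hn0 : (n : ℂ) ≠ 0 := Nat.cast_ne_zero.mpr (by omega)
  have hterm : ∀ j ∈ Finset.range n,
      (x (p - n + 1 + j) : ℂ) *
          Complex.exp (-(2 * (Real.pi : ℂ) * Complex.I * (j : ℂ) * ((n : ℂ) / 2)) / (n : ℂ)) =
        ((A * (-1 : ℝ) ^ (p - (n : ℤ) + 1) * Real.cos φ : ℝ) : ℂ) := by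
    intro j _
    have harg : (-(2 * (Real.pi : ℂ) * Complex.I * (j : ℂ) * ((n : ℂ) / 2)) / (n : ℂ))
        = -(Real.pi : ℂ) * Complex.I * (j : ℕ) := by
      field_simp
    have hexp : Complex.exp (-(2 * (Real.pi : ℂ) * Complex.I * (j : ℂ) * ((n : ℂ) / 2)) / (n : ℂ))
        = ((-1 : ℝ) ^ j : ℝ) := by
      rw [harg]
      have : (-(Real.pi : ℂ) * Complex.I * (j : ℕ)) = (j : ℕ) * (-(Real.pi : ℂ) * Complex.I) := by
        ring
      rw [this, Complex.exp_nat_mul]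
      have : Complex.exp (-(Real.pi : ℂ) * Complex.I) = -1 := by
        rw [neg_mul, Complex.exp_neg, Complex.exp_pi_mul_I]
        norm_num
      rw [this]
      push_cast
      ring
    have hxv : x (p - n + 1 + j)
        = A * ((-1 : ℝ) ^ (p - (n : ℤ) + 1) * (-1 : ℝ) ^ j) * Real.cos φ := by
      rw [hx, cos_pi_int_add, zpow_add₀ (by norm_num : (-1:ℝ) ≠ 0), zpow_natCast]
      ring
    rw [hexp, hxv, ← Complex.ofReal_mul]
    congr 1
    have hsq : ((-1 : ℝ) ^ j) * ((-1 : ℝ) ^ j) = 1 := by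
      rw [← pow_add]
      exact Even.neg_one_pow ⟨j, rfl⟩
    linear_combination (A * (-1 : ℝ) ^ (p - (n : ℤ) + 1) * Real.cos φ) * hsq
  rw [Finset.sum_congr rfl hterm, Finset.sum_const, Finset.card_range, nsmul_eq_mul]
  have hsq : (1 / (Real.sqrt n : ℂ)) * (n : ℂ) = (Real.sqrt n : ℂ) := by
    have h0 : (Real.sqrt n : ℂ) ≠ 0 := by
      rw [Complex.ofReal_ne_zero]
      positivity
    field_simp
    norm_cast
    rw [Real.sq_sqrt (by positivity)]
  rw [← mul_assoc, hsq]
  push_cast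
  ring
end

section
/- Let s_t be the step function equal to 1 for t ≥ d and 0 for t < d, where d is an integer. Fix a window size n ≥ 1 and suppose the window position p satisfies d ≤ p ≤ d + n − 1 (the window covers the step). Then a_{0,p} = (p − d + 1)/√n, and for every k with 1 ≤ k ≤ n−1, a_{k,p} = (ω_n^{−k(d − p + n − 1)} / √n) · (1 − ω_n^{−k(p − d + 1)}) / (1 − ω_n^{−k}). In particular all n coefficients are nonzero quantities given by these formulas even though the input has no periodic component (ringing). -/
open Complex Finset

/-- Step function, window covering the jump (`d ≤ p ≤ d + n − 1`): ringing.
The SWDFT coefficients are `(p − d + 1)/√n` at frequency `0`, and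
`ω_n^{−k(d−p+n−1)}/√n · (1 − ω_n^{−k(p−d+1)})/(1 − ω_n^{−k})` at `1 ≤ k ≤ n−1`. -/
theorem swdft_step_during_jump
    (n : ℕ) (hn : 1 ≤ n) (d : ℤ)
    (s : ℤ → ℝ) (hs : ∀ t : ℤ, s t = if d ≤ t then 1 else 0)
    (p : ℤ) (hp1 : d ≤ p) (hp2 : p ≤ d + (n : ℤ) - 1)
    (ω : ℂ) (hω : ω = Complex.exp (2 * (Real.pi : ℂ) * Complex.I / (n : ℂ)))
    (a : ℕ → ℂ)
    (ha : ∀ k, a k = (1 / Real.sqrt n : ℂ) *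
      ∑ j ∈ Finset.range n, (s (p - n + 1 + j) : ℂ) *
        Complex.exp (-(2 * (Real.pi : ℂ) * Complex.I * (j : ℂ) * (k : ℂ)) / (n : ℂ))) :
    a 0 = (((p : ℂ) - (d : ℂ) + 1) / (Real.sqrt n : ℂ)) ∧
      ∀ k : ℕ, 1 ≤ k → k ≤ n - 1 →
        a k = (ω ^ (-(k : ℤ) * (d - p + (n : ℤ) - 1)) / (Real.sqrt n : ℂ)) *
          ((1 - ω ^ (-(k : ℤ) * (p - d + 1))) / (1 - ω ^ (-(k : ℤ)))) := by
  have hn0 : (n : ℤ) ≥ 1 := by exact_mod_cast hn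
  obtain ⟨q, hq⟩ : ∃ q : ℕ, (q : ℤ) = p - d := ⟨(p - d).toNat, Int.toNat_of_nonneg (by omega)⟩
  have hqn : q < n := by omega
  obtain ⟨m, hm⟩ : ∃ m : ℕ, (m : ℤ) = d - p + (n : ℤ) - 1 := ⟨n - 1 - q, by omega⟩
  have hmn : m ≤ n := by omega
  have hnm : n - m = q + 1 := by omega
  -- key sum reduction
  have key : ∀ f : ℕ → ℂ, (∑ j ∈ Finset.range n, (s (p - n + 1 + j) : ℂ) * f j)
      = ∑ j ∈ Finset.Ico m n, f j := by
    intro f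
    rw [Finset.range_eq_Ico, ← Finset.sum_Ico_consecutive _ (Nat.zero_le m) hmn]
    have h1 : (∑ j ∈ Finset.Ico 0 m, (s (p - n + 1 + j) : ℂ) * f j) = 0 := by
      apply Finset.sum_eq_zero
      intro j hj
      simp only [Finset.mem_Ico] at hj
      rw [hs, if_neg (by omega)]
      simp
    have h2 : (∑ j ∈ Finset.Ico m n, (s (p - n + 1 + j) : ℂ) * f j)
        = ∑ j ∈ Finset.Ico m n, f j := by
      apply Finset.sum_congr rfl
      intro j hj
      simp only [Finset.mem_Ico] at hj
      rw [hs, if_pos (by omega)]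
      simp
    rw [h1, h2, zero_add]
  have hsqrt : (Real.sqrt n : ℂ) ≠ 0 := by
    have : (0:ℝ) < Real.sqrt n := Real.sqrt_pos.2 (by exact_mod_cast Nat.lt_of_lt_of_le Nat.zero_lt_one hn)
    exact_mod_cast ne_of_gt this
  constructor
  · rw [ha 0]
    have : ∀ j : ℕ, Complex.exp (-(2 * (Real.pi : ℂ) * Complex.I * (j : ℂ) * ((0:ℕ) : ℂ)) / (n : ℂ)) = 1 := by
      intro j; norm_num
    simp only [this]
    rw [key (fun _ => 1)]
    simp only [Finset.sum_const, Nat.card_Ico, nsmul_eq_mul, mul_one]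
    rw [hnm]
    have hc : ((q : ℂ) + 1) = (p : ℂ) - (d : ℂ) + 1 := by
      have : ((q : ℤ) : ℂ) = ((p - d : ℤ) : ℂ) := by exact_mod_cast congrArg (Int.cast : ℤ → ℂ) hq
      push_cast at this ⊢
      linear_combination this
    push_cast
    rw [hc]
    ring
  · intro k hk1 hk2
    have hkn : k < n := by omega
    have hωz : ∀ t : ℤ, ω ^ t = Complex.exp ((t : ℂ) * (2 * (Real.pi : ℂ) * Complex.I / (n : ℂ))) := by
      intro t
      rw [hω, ← Complex.exp_int_mul]
    set c : ℂ := 2 * (Real.pi : ℂ) * Complex.I / (n : ℂ) with hc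
    set z : ℂ := ω ^ (-(k : ℤ)) with hz
    have hzexp : z = Complex.exp ((-(k : ℂ)) * c) := by
      rw [hz, hωz]; push_cast; ring_nf
    have hz1 : z ≠ 1 := by
      have hprim : IsPrimitiveRoot ω n := by
        rw [hω]; exact Complex.isPrimitiveRoot_exp n (by omega)
      intro h
      rw [hz, zpow_neg, zpow_natCast, inv_eq_one] at h
      exact hprim.pow_ne_one_of_pos_of_lt (by omega) hkn h
    have hzpow : ∀ j : ℕ, Complex.exp (-(2 * (Real.pi : ℂ) * Complex.I * (j : ℂ) * (k : ℂ)) / (n : ℂ)) = z ^ j := by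
      intro j
      rw [hzexp, ← Complex.exp_nat_mul]
      congr 1
      rw [hc]
      field_simp
    have hzm : ω ^ (-(k : ℤ) * (d - p + (n : ℤ) - 1)) = z ^ m := by
      rw [hωz, hzexp, ← Complex.exp_nat_mul]
      congr 1
      have hmc : ((m : ℤ) : ℂ) = ((d - p + (n : ℤ) - 1 : ℤ) : ℂ) := by exact_mod_cast congrArg (Int.cast : ℤ → ℂ) hm
      push_cast at hmc ⊢
      rw [← hmc]
      ring
    have hzq : ω ^ (-(k : ℤ) * (p - d + 1)) = z ^ (q + 1) := by
      rw [hωz, hzexp, ← Complex.exp_nat_mul]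
      congr 1
      have hqc : ((q : ℤ) : ℂ) = ((p - d : ℤ) : ℂ) := by exact_mod_cast congrArg (Int.cast : ℤ → ℂ) hq
      push_cast at hqc ⊢
      rw [hqc]
      ring
    rw [ha k]
    simp only [hzpow]
    rw [key (fun j => z ^ j)]
    rw [Finset.sum_Ico_eq_sum_range, hnm]
    have : (∑ i ∈ Finset.range (q + 1), z ^ (m + i)) = z ^ m * ∑ i ∈ Finset.range (q + 1), z ^ i := by
      rw [Finset.mul_sum]
      exact Finset.sum_congr rfl (fun i _ => pow_add z m i)
    rw [this, geom_sum_eq hz1, hzm, hzq]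
    rw [show ((z ^ (q+1) - 1) / (z - 1)) = (1 - z ^ (q+1)) / (1 - z) by
      rw [← neg_sub 1 (z ^ (q+1)), ← neg_sub 1 z, neg_div_neg_eq]]
    ring
end
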